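/- For every strictly increasing g : ω → ω, the function S_g : dom(S_g) → 2^ω defined by S_g(x) = z_{ℓ(x),g} is continuous on its domain (with the subspace topology of 2^ω). -/

import Mathlib

/-- For a bijection `ℓ : 2^{<ω} → ω` and `x ∈ 2^ω`, the set
`ℓ(x) = {ℓ(x↾n) : n ∈ ω} ⊆ ω`. -/
def ellSet (ℓ : List Bool ≃ ℕ) (x : ℕ → Bool) : Set ℕ :=
  {m | ∃ n : ℕ, ℓ (List.ofFn fun i : Fin n => x i) = m}

/-- `A_+`: the elements of `A` of even index in the increasing enumeration of `A`. -/
def Aplus (A : Set ℕ) : Set ℕ := {m | ∃ k : ℕ, Even k ∧ Nat.nth (· ∈ A) k = m}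

open Classical in
/-- The real `z_{A,g} ∈ 2^ω`: writing `range(g) ∩ A = {x_0 < x_1 < ⋯}`,
`z_{A,g}(n) = 1` iff `x_n ∈ A_+`. -/
noncomputable def zAg (A : Set ℕ) (g : ℕ → ℕ) : ℕ → Bool := fun n =>
  if Nat.nth (· ∈ Set.range g ∩ A) n ∈ Aplus A then true else false

/-- The map `S_g(x) = z_{ℓ(x),g}`. -/
noncomputable def Sg (ℓ : List Bool ≃ ℕ) (g : ℕ → ℕ) (x : ℕ → Bool) : ℕ → Bool :=
  zAg (ellSet ℓ x) g

open Classical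

lemma mem_ellSet_iff (ℓ : List Bool ≃ ℕ) (x : ℕ → Bool) (m : ℕ) :
    m ∈ ellSet ℓ x ↔ (List.ofFn fun i : Fin (ℓ.symm m).length => x i) = ℓ.symm m := by
  constructor
  · rintro ⟨n, hn⟩
    have h : (List.ofFn fun i : Fin n => x i) = ℓ.symm m := by
      rw [← hn, Equiv.symm_apply_apply]
    have hlen : (ℓ.symm m).length = n := by rw [← h, List.length_ofFn]
    subst hlen; exact h
  · intro h
    exact ⟨(ℓ.symm m).length, by rw [h, Equiv.apply_symm_apply]⟩

lemma ellSet_infinite (ℓ : List Bool ≃ ℕ) (x : ℕ → Bool) : (ellSet ℓ x).Infinite := by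
  have hr : ellSet ℓ x = Set.range (fun n : ℕ => ℓ (List.ofFn fun i : Fin n => x i)) := rfl
  rw [hr]
  apply Set.infinite_range_of_injective
  intro a b hab
  have := ℓ.injective hab
  have : a = b := by
    have h1 := congrArg List.length this
    simpa using h1
  exact this

lemma count_congr {p q : ℕ → Prop} {i1 : DecidablePred p} {i2 : DecidablePred q} (v : ℕ)
    (h : ∀ m < v, (p m ↔ q m)) : @Nat.count p i1 v = @Nat.count q i2 v := by
  rw [Nat.count_eq_card_filter_range, Nat.count_eq_card_filter_range]
  congr 1
  ext m
  simp only [Finset.mem_filter, Finset.mem_range]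
  exact and_congr_right fun hm => h m hm

lemma mem_Aplus_iff (A : Set ℕ) (hA : A.Infinite) (v : ℕ) (hv : v ∈ A) :
    v ∈ Aplus A ↔ Even (Nat.count (· ∈ A) v) := by
  constructor
  · rintro ⟨k, hk, hnth⟩
    have : Nat.count (· ∈ A) v = k := by
      rw [← hnth]; exact Nat.count_nth_of_infinite (p := (· ∈ A)) hA k
    rwa [this]
  · intro h
    exact ⟨Nat.count (· ∈ A) v, h, Nat.nth_count hv⟩

/-- For strictly increasing `g`, the map `S_g` is continuous on its domain
`dom(S_g) = {x : range(g) ∩ ℓ(x) infinite}`. -/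
theorem Sg_continuousOn (ℓ : List Bool ≃ ℕ) (g : ℕ → ℕ) (hg : StrictMono g) :
    ContinuousOn (Sg ℓ g) {x : ℕ → Bool | (Set.range g ∩ ellSet ℓ x).Infinite} := by
  intro x hx
  apply ContinuousAt.continuousWithinAt
  rw [continuousAt_pi]
  intro n
  set S : Set ℕ := Set.range g ∩ ellSet ℓ x with hS
  have hSinf : S.Infinite := hx
  set v : ℕ := Nat.nth (· ∈ S) n with hvdef
  have hvS : v ∈ S := Nat.nth_mem_of_infinite hSinf n
  have hcount : Nat.count (· ∈ S) v = n :=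
    (count_congr v (fun _ _ => Iff.rfl)).trans (Nat.count_nth_of_infinite (p := (· ∈ S)) hSinf n)
  set K : ℕ := (Finset.range (v + 1)).sup (fun m => (ℓ.symm m).length) with hK
  -- the key: any y agreeing with x below K has the same value
  apply Filter.EventuallyEq.continuousAt (y := Sg ℓ g x n)
  have hev : ∀ᶠ y : ℕ → Bool in nhds x, ∀ i ∈ Finset.range K, y i = x i := by
    rw [Filter.eventually_all_finset]
    intro i _
    have : ContinuousAt (fun y : ℕ → Bool => y i) x := (continuous_apply i).continuousAt
    have hmem : {x i} ∈ nhds (x i) := by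
      exact (isOpen_discrete {x i}).mem_nhds rfl
    exact this hmem
  filter_upwards [hev] with y hy
  have hagree : ∀ m ≤ v, (m ∈ ellSet ℓ y ↔ m ∈ ellSet ℓ x) := by
    intro m hm
    rw [mem_ellSet_iff, mem_ellSet_iff]
    have hlen : (ℓ.symm m).length ≤ K := by
      apply Finset.le_sup (f := fun m => (ℓ.symm m).length)
      simp [Nat.lt_succ_iff, hm]
    have : (fun i : Fin (ℓ.symm m).length => y i) = (fun i : Fin (ℓ.symm m).length => x i) := by
      funext i
      exact hy i (Finset.mem_range.mpr (lt_of_lt_of_le i.isLt hlen))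
    rw [this]
  set Sy : Set ℕ := Set.range g ∩ ellSet ℓ y with hSy
  have hagree' : ∀ m ≤ v, (m ∈ Sy ↔ m ∈ S) := by
    intro m hm
    simp only [hSy, hS, Set.mem_inter_iff]
    rw [hagree m hm]
  have hvSy : v ∈ Sy := (hagree' v le_rfl).mpr hvS
  have hcounty : Nat.count (· ∈ Sy) v = n := by
    exact (count_congr v (fun m hm => hagree' m hm.le)).trans hcount
  have hnthy : Nat.nth (· ∈ Sy) n = v := by
    rw [← hcounty]; exact Nat.nth_count hvSy
  have hvy : v ∈ ellSet ℓ y := hvSy.2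
  have hvx : v ∈ ellSet ℓ x := hvS.2
  show Sg ℓ g y n = Sg ℓ g x n
  unfold Sg zAg
  rw [show Nat.nth (· ∈ Set.range g ∩ ellSet ℓ y) n = v from hnthy,
      show Nat.nth (· ∈ Set.range g ∩ ellSet ℓ x) n = v from hvdef.symm]
  have hAiff : (v ∈ Aplus (ellSet ℓ y)) ↔ (v ∈ Aplus (ellSet ℓ x)) := by
    rw [mem_Aplus_iff _ (ellSet_infinite ℓ y) v hvy,
        mem_Aplus_iff _ (ellSet_infinite ℓ x) v hvx,
        count_congr (q := (· ∈ ellSet ℓ x)) (i2 := fun _ => inferInstance) v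
          (fun m hm => hagree m hm.le)]
  exact if_congr hAiff rfl rfl
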